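/- arXiv:1805.06748 — 3 statements merged into one kernel-verified Lean document; each statement's English description precedes it below -/
import Mathlib

section
/- For n ≥ 2, the kernel of the homomorphism ε: W_n → {±1} sending each generator s_i to -1 is a free group of rank n-1, with basis {x_i := s_i s_{i+1} | i = 1, ..., n-1}. -/
/-- The relations of the universal Coxeter group of rank `n`. -/
def univCoxeterRels (n : ℕ) : Set (FreeGroup (Fin n)) :=
  {r | ∃ i : Fin n, r = (FreeGroup.of i) ^ 2}

/-- The universal Coxeter group `Wₙ`, the free product of `n` copies of `ℤ/2`. -/
abbrev UnivCoxeterGroup (n : ℕ) := PresentedGroup (univCoxeterRels n)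

/-- The standard generators `sᵢ` of `Wₙ`. -/
def ucs {n : ℕ} (i : Fin n) : UnivCoxeterGroup n := PresentedGroup.of i

namespace UCFAux

variable {n : ℕ}

lemma ucs_sq (i : Fin n) : ucs i ^ 2 = 1 := by
  have h : ((FreeGroup.of i) ^ 2 : FreeGroup (Fin n)) ∈
      Subgroup.normalClosure (univCoxeterRels n) :=
    Subgroup.subset_normalClosure ⟨i, rfl⟩
  have h2 : ucs i ^ 2 = PresentedGroup.mk (univCoxeterRels n) ((FreeGroup.of i) ^ 2) := by
    rw [map_pow]; rfl
  rw [h2]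
  exact (QuotientGroup.eq_one_iff _).2 h

lemma ucs_mul_self (i : Fin n) : ucs i * ucs i = 1 := by
  have := ucs_sq i; rwa [sq] at this

lemma ucs_inv (i : Fin n) : (ucs i)⁻¹ = ucs i :=
  inv_eq_of_mul_eq_one_right (ucs_mul_self i)

/-- Homomorphism from `ℤˣ` determined by an involution. -/
def unitsHom {G : Type*} [Group G] (g : G) (hg : g * g = 1) : ℤˣ →* G where
  toFun u := if u = 1 then 1 else g
  map_one' := if_pos rfl
  map_mul' u v := by
    rcases Int.units_eq_one_or u with h | h <;> rcases Int.units_eq_one_or v with h' | h' <;>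
      subst h <;> subst h' <;> simp [hg]

@[simp] lemma unitsHom_neg_one {G : Type*} [Group G] (g : G) (hg : g * g = 1) :
    unitsHom g hg (-1) = g := by
  simp [unitsHom]

/-- The inversion endomorphism of the free group. -/
def inv1 : FreeGroup (Fin (n - 1)) →* FreeGroup (Fin (n - 1)) :=
  FreeGroup.lift fun i => (FreeGroup.of i)⁻¹

lemma inv1_comp_inv1 : (inv1 (n := n)).comp inv1 = MonoidHom.id _ :=
  FreeGroup.ext_hom _ _ (by simp [inv1])

/-- The inversion automorphism of the free group. -/
def invAut : MulAut (FreeGroup (Fin (n - 1))) :=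
  MonoidHom.toMulEquiv inv1 inv1 inv1_comp_inv1 inv1_comp_inv1

@[simp] lemma invAut_apply (x : FreeGroup (Fin (n - 1))) : invAut x = inv1 x := rfl

lemma invAut_sq : (invAut (n := n)) * invAut = 1 := by
  ext x
  have := congrArg (fun f => f x) (inv1_comp_inv1 (n := n))
  simpa using this

/-- The action of `ℤˣ` on the free group by inversion. -/
def act : ℤˣ →* MulAut (FreeGroup (Fin (n - 1))) := unitsHom invAut invAut_sq

@[simp] lemma act_one : act (1 : ℤˣ) = (1 : MulAut (FreeGroup (Fin (n - 1)))) := map_one act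

@[simp] lemma act_neg_one : act (n := n) (-1) = invAut := unitsHom_neg_one _ _

/-- Extended generators of the free group, `1` out of range. -/
def Aext (j : ℕ) : FreeGroup (Fin (n - 1)) :=
  if h : j < n - 1 then FreeGroup.of ⟨j, h⟩ else 1

lemma inv1_Aext (j : ℕ) : inv1 (Aext (n := n) j) = (Aext j)⁻¹ := by
  unfold Aext; split <;> simp [inv1]

/-- The images of generators of `Wₙ` in the semidirect product. -/
def fgen (i : Fin n) : FreeGroup (Fin (n - 1)) ⋊[act] ℤˣ :=
  SemidirectProduct.inl (Aext i.1) * SemidirectProduct.inr (-1)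

lemma fgen_eq_mk (i : Fin n) : fgen i = ⟨Aext i.1, -1⟩ :=
  (SemidirectProduct.mk_eq_inl_mul_inr _ _).symm

lemma fgen_sq (i : Fin n) : fgen i ^ 2 = 1 := by
  rw [sq, fgen_eq_mk, SemidirectProduct.mul_def]
  show (⟨Aext i.1 * act (-1) (Aext i.1), (-1) * (-1)⟩ :
    FreeGroup (Fin (n - 1)) ⋊[act] ℤˣ) = 1
  rw [act_neg_one, invAut_apply, inv1_Aext, mul_inv_cancel,
    show ((-1 : ℤˣ) * -1) = 1 from by decide]
  rfl

/-- The homomorphism `θ : Wₙ →* F ⋊ ℤˣ`. -/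
def theta : UnivCoxeterGroup n →* FreeGroup (Fin (n - 1)) ⋊[act] ℤˣ :=
  PresentedGroup.toGroup (f := fgen) (by
    rintro r ⟨i, rfl⟩
    rw [map_pow, FreeGroup.lift_apply_of]
    exact fgen_sq i)

@[simp] lemma theta_ucs (i : Fin n) : theta (ucs i) = fgen i :=
  PresentedGroup.toGroup.of _

/-- The elements `zᵢ = sᵢ s_{n-1}`. -/
def zgen (i : Fin (n - 1)) : UnivCoxeterGroup n :=
  ucs ⟨i.1, by have := i.2; omega⟩ * ucs ⟨n - 1, by have := i.2; omega⟩

/-- The homomorphism `F →* Wₙ`, `aᵢ ↦ zᵢ`. -/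
def phi : FreeGroup (Fin (n - 1)) →* UnivCoxeterGroup n := FreeGroup.lift zgen

@[simp] lemma phi_of (i : Fin (n - 1)) : phi (FreeGroup.of i) = zgen i := FreeGroup.lift_apply_of

section hn

variable (hn : 2 ≤ n)

/-- The last generator. -/
def tt : UnivCoxeterGroup n := ucs ⟨n - 1, by omega⟩

lemma tt_mul_tt : tt hn * tt hn = 1 := ucs_mul_self _

lemma zgen_eq (i : Fin (n - 1)) : zgen i = ucs ⟨i.1, by have := i.2; omega⟩ * tt hn := rfl

lemma tt_inv : (tt hn)⁻¹ = tt hn := ucs_inv _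

lemma phi_inv1 (x : FreeGroup (Fin (n - 1))) :
    phi (inv1 x) = tt hn * phi x * (tt hn)⁻¹ := by
  have h : (phi (n := n)).comp inv1
      = ((MulAut.conj (tt hn)).toMonoidHom).comp phi := by
    apply FreeGroup.ext_hom
    intro i
    simp only [MonoidHom.comp_apply, inv1, FreeGroup.lift_apply_of, map_inv, phi_of,
      MulEquiv.coe_toMonoidHom, MulAut.conj_apply]
    rw [zgen_eq hn, mul_inv_rev, ucs_inv, tt_inv hn]
    simp only [mul_assoc]
    rw [tt_mul_tt hn, mul_one]
  exact congrArg (fun f => f x) h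

/-- The homomorphism `Ξ : F ⋊ ℤˣ →* Wₙ`. -/
def xi : FreeGroup (Fin (n - 1)) ⋊[act] ℤˣ →* UnivCoxeterGroup n :=
  SemidirectProduct.lift phi (unitsHom (tt hn) (tt_mul_tt hn)) (by
    intro u
    rcases Int.units_eq_one_or u with h | h <;> subst h
    · ext x
      simp [unitsHom]
    · ext x
      simp only [MonoidHom.comp_apply, MulEquiv.coe_toMonoidHom, act_neg_one,
        invAut_apply, unitsHom_neg_one, MulAut.conj_apply]
      exact phi_inv1 hn (FreeGroup.of x))

@[simp] lemma xi_inl (x : FreeGroup (Fin (n - 1))) :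
    xi hn (SemidirectProduct.inl x) = phi x := SemidirectProduct.lift_inl _ _ _ _

@[simp] lemma xi_inr_neg_one : xi hn (SemidirectProduct.inr (-1)) = tt hn := by
  simp [xi]

lemma xi_comp_theta : (xi hn).comp theta = MonoidHom.id (UnivCoxeterGroup n) := by
  apply PresentedGroup.ext
  intro i
  show xi hn (theta (ucs i)) = ucs i
  rw [theta_ucs, fgen, map_mul, xi_inl, xi_inr_neg_one]
  unfold Aext
  split
  · next h =>
    rw [phi_of]
    show (ucs ⟨i.1, _⟩ * ucs ⟨n - 1, _⟩) * ucs ⟨n - 1, _⟩ = ucs i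
    rw [mul_assoc, ucs_mul_self, mul_one]
  · next h =>
    rw [map_one, one_mul]
    have : i = ⟨n - 1, by omega⟩ := by
      apply Fin.ext
      have := i.2
      simp only at h ⊢
      omega
    rw [this]
    rfl

lemma xi_theta (g : UnivCoxeterGroup n) : xi hn (theta g) = g :=
  congrArg (fun f => f g) (xi_comp_theta hn)

end hn

/-! ### The change of basis automorphism -/

/-- Partial products `aⱼ a_{j+1} ⋯ a_{n-2}`. -/
def gam (j : ℕ) : FreeGroup (Fin (n - 1)) :=
  ((List.range' j (n - 1 - j)).map Aext).prod

lemma gam_of_ge (j : ℕ) (h : ¬ j < n - 1) : gam (n := n) j = 1 := by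
  unfold gam
  rw [Nat.sub_eq_zero_of_le (le_of_not_gt h)]
  simp

lemma gam_succ (j : ℕ) (h : j < n - 1) : gam (n := n) j = Aext j * gam (j + 1) := by
  unfold gam
  rw [show n - 1 - j = (n - 1 - (j + 1)) + 1 by omega, List.range'_succ, List.map_cons,
    List.prod_cons]

/-- The homomorphism `β`, `aᵢ ↦ aᵢ a_{i+1}⁻¹`. -/
def beta : FreeGroup (Fin (n - 1)) →* FreeGroup (Fin (n - 1)) :=
  FreeGroup.lift fun i => FreeGroup.of i * (Aext (i.1 + 1))⁻¹

@[simp] lemma beta_of (i : Fin (n - 1)) :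
    beta (FreeGroup.of i) = FreeGroup.of i * (Aext (i.1 + 1))⁻¹ := FreeGroup.lift_apply_of

/-- The homomorphism `γ`, `aᵢ ↦ aᵢ a_{i+1} ⋯ a_{n-2}`. -/
def gamma : FreeGroup (Fin (n - 1)) →* FreeGroup (Fin (n - 1)) :=
  FreeGroup.lift fun i => gam i.1

@[simp] lemma gamma_of (i : Fin (n - 1)) : gamma (FreeGroup.of i) = gam i.1 := FreeGroup.lift_apply_of

lemma gamma_Aext (j : ℕ) : gamma (Aext (n := n) j) = gam j := by
  unfold Aext
  split
  · next h => rw [gamma_of]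
  · next h => rw [map_one, gam_of_ge j h]

lemma beta_Aext (j : ℕ) (h : j < n - 1) :
    beta (Aext (n := n) j) = Aext j * (Aext (j + 1))⁻¹ := by
  have h1 : Aext (n := n) j = FreeGroup.of ⟨j, h⟩ := dif_pos h
  rw [h1, beta_of]

lemma tele (m j : ℕ) :
    ((List.range' j m).map (fun k => Aext (n := n) k * (Aext (k + 1))⁻¹)).prod
      = Aext j * (Aext (j + m))⁻¹ := by
  induction m generalizing j with
  | zero => simp
  | succ m ih =>
      rw [List.range'_succ, List.map_cons, List.prod_cons, ih (j + 1),
        show j + 1 + m = j + (m + 1) by omega]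
      group

lemma beta_comp_gamma : (beta (n := n)).comp gamma = MonoidHom.id _ := by
  apply FreeGroup.ext_hom
  intro i
  have hi := i.2
  show beta (gamma (FreeGroup.of i)) = FreeGroup.of i
  rw [gamma_of, gam, map_list_prod, List.map_map]
  have hmap : (List.range' i.1 (n - 1 - i.1)).map (⇑(beta (n := n)) ∘ Aext (n := n))
      = (List.range' i.1 (n - 1 - i.1)).map
        (fun k => Aext (n := n) k * (Aext (k + 1))⁻¹) := by
    apply List.map_congr_left
    intro k hk
    rw [List.mem_range'_1] at hk
    exact beta_Aext k (by omega)
  rw [hmap, tele, show i.1 + (n - 1 - i.1) = n - 1 by omega,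
    show Aext (n := n) (n - 1) = 1 from dif_neg (by omega), inv_one, mul_one]
  exact dif_pos hi

lemma gamma_comp_beta : (gamma (n := n)).comp beta = MonoidHom.id _ := by
  apply FreeGroup.ext_hom
  intro i
  have hi := i.2
  show gamma (beta (FreeGroup.of i)) = FreeGroup.of i
  rw [beta_of, map_mul, map_inv, gamma_Aext, gamma_of,
    gam_succ i.1 hi, mul_assoc, mul_inv_cancel, mul_one]
  exact dif_pos hi

/-- The change of basis automorphism of the free group. -/
def betaEquiv : FreeGroup (Fin (n - 1)) ≃* FreeGroup (Fin (n - 1)) :=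
  MonoidHom.toMulEquiv beta gamma gamma_comp_beta beta_comp_gamma

@[simp] lemma betaEquiv_apply (x : FreeGroup (Fin (n - 1))) : betaEquiv x = beta x := rfl

end UCFAux

open UCFAux SemidirectProduct in
/-- For `n ≥ 2`, the kernel of `ε : Wₙ → {±1}`, `ε(sᵢ) = -1`, is a free group of
rank `n - 1` with basis `xᵢ = sᵢ s_{i+1}`, `i = 1, …, n-1`. -/
theorem univCoxeter_sign_ker_free (n : ℕ) (hn : 2 ≤ n)
    (ε : UnivCoxeterGroup n →* ℤˣ) (hε : ∀ i : Fin n, ε (ucs i) = -1) :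
    ∃ e : FreeGroup (Fin (n - 1)) ≃* MonoidHom.ker ε,
      ∀ i : Fin (n - 1),
        ((e (FreeGroup.of i) : MonoidHom.ker ε) : UnivCoxeterGroup n) =
          ucs ⟨i.val, by omega⟩ * ucs ⟨i.val + 1, by omega⟩ := by
  -- `ε` agrees with the right projection after `theta`
  have hright : ∀ g : UnivCoxeterGroup n, rightHom (theta g) = ε g := by
    have h : (rightHom).comp (theta (n := n)) = ε := by
      apply PresentedGroup.ext
      intro i
      show rightHom (theta (ucs i)) = ε (PresentedGroup.of i)
      rw [theta_ucs, fgen, map_mul, rightHom_inl, rightHom_inr, one_mul, ← hε i]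
      rfl
    exact fun g => congrArg (fun f => f g) h
  -- `phi` takes values in the kernel
  have hmem : ∀ x : FreeGroup (Fin (n - 1)), phi x ∈ MonoidHom.ker ε := by
    have h : ε.comp (phi (n := n)) = 1 := by
      apply FreeGroup.ext_hom
      intro i
      show ε (phi (FreeGroup.of i)) = 1
      rw [phi_of, zgen, map_mul, hε, hε]
      decide
    intro x
    exact congrArg (fun f => f x) h
  set phiK : FreeGroup (Fin (n - 1)) →* MonoidHom.ker ε :=
    phi.codRestrict (MonoidHom.ker ε) hmem with hphiK
  -- the inverse map
  have hrker : ∀ g : MonoidHom.ker ε, (theta (g : UnivCoxeterGroup n)).right = 1 := by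
    intro g
    have := hright (g : UnivCoxeterGroup n)
    rw [g.2] at this
    exact this
  set psi : MonoidHom.ker ε →* FreeGroup (Fin (n - 1)) :=
    { toFun := fun g => (theta (g : UnivCoxeterGroup n)).left
      map_one' := by simp
      map_mul' := fun a b => by
        have hco : ((a * b : MonoidHom.ker ε) : UnivCoxeterGroup n)
            = (a : UnivCoxeterGroup n) * (b : UnivCoxeterGroup n) := rfl
        show (theta ((a * b : MonoidHom.ker ε) : UnivCoxeterGroup n)).left = _
        rw [hco, map_mul, mul_left, hrker a, map_one, MulAut.one_apply] } with hpsi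
  have h1 : psi.comp phiK = MonoidHom.id _ := by
    apply FreeGroup.ext_hom
    intro i
    have hi := i.2
    show (theta (phi (FreeGroup.of i))).left = FreeGroup.of i
    rw [phi_of, zgen, map_mul, theta_ucs, theta_ucs, fgen_eq_mk, fgen_eq_mk, mul_left]
    show Aext i.1 * act (-1) (Aext (n - 1)) = FreeGroup.of i
    rw [show Aext (n := n) (n - 1) = 1 from dif_neg (by omega), map_one, mul_one,
      Aext, dif_pos hi]
  have h2 : phiK.comp psi = MonoidHom.id _ := by
    ext g
    show phi (theta (g : UnivCoxeterGroup n)).left = (g : UnivCoxeterGroup n)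
    rw [← xi_inl hn]
    have : (inl (theta (g : UnivCoxeterGroup n)).left :
        FreeGroup (Fin (n - 1)) ⋊[act] ℤˣ) = theta (g : UnivCoxeterGroup n) := by
      conv_rhs => rw [← inl_left_mul_inr_right (theta (g : UnivCoxeterGroup n))]
      rw [hrker g, map_one, mul_one]
    rw [this, xi_theta hn]
  set e' : FreeGroup (Fin (n - 1)) ≃* MonoidHom.ker ε :=
    MonoidHom.toMulEquiv phiK psi h1 h2 with he'
  refine ⟨betaEquiv.trans e', fun i => ?_⟩
  have hi := i.2
  show (phi (beta (FreeGroup.of i)) : UnivCoxeterGroup n) = _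
  rw [beta, FreeGroup.lift_apply_of, map_mul, map_inv, phi_of, zgen]
  by_cases h : i.1 + 1 < n - 1
  · rw [show Aext (n := n) (i.1 + 1) = FreeGroup.of ⟨i.1 + 1, h⟩ from dif_pos h, phi_of,
      zgen, mul_inv_rev, ucs_inv, ucs_inv, mul_assoc, ← mul_assoc (ucs ⟨n - 1, _⟩),
      ucs_mul_self, one_mul]
  · rw [show Aext (n := n) (i.1 + 1) = 1 from dif_neg h, map_one, inv_one, mul_one]
    congr 1
    apply congrArg
    apply Fin.ext
    show (n : ℕ) - 1 = i.1 + 1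
    omega
end

section
/- For n ≥ 3, in Aut(W_n) the product σ_{12}σ_{13}···σ_{1n}σ_{21}σ_{23}···σ_{2n} equals the inner automorphism given by conjugation by x_1 = s_1 s_2, restricted appropriately; more precisely, its image under the restriction map to Aut(ker ε) ≅ Aut(F_{n-1}) is conjugation by x_1. -/
lemma ucs_mul_self {n : ℕ} (i : Fin n) : ucs i * ucs i = 1 := by
  have h : ((FreeGroup.of i) ^ 2 : FreeGroup (Fin n)) ∈
      Subgroup.normalClosure (univCoxeterRels n) :=
    Subgroup.subset_normalClosure ⟨i, rfl⟩
  have h2 : (ucs i * ucs i : UnivCoxeterGroup n)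
      = QuotientGroup.mk ((FreeGroup.of i) ^ 2) := by
    rw [sq]; rfl
  rw [h2]
  exact (QuotientGroup.eq_one_iff _).mpr h

lemma ucs_inv {n : ℕ} (i : Fin n) : (ucs i)⁻¹ = ucs i :=
  inv_eq_of_mul_eq_one_right (ucs_mul_self i)

lemma ucs_mul_cancel {n : ℕ} (i : Fin n) (x : UnivCoxeterGroup n) :
    ucs i * (ucs i * x) = x := by
  rw [← mul_assoc, ucs_mul_self, one_mul]

section Aux

variable {n : ℕ} (σ : Fin n → Fin n → MulAut (UnivCoxeterGroup n))
  (hσ : ∀ i j : Fin n, i ≠ j →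
      σ i j (ucs j) = ucs i * ucs j * ucs i ∧
      ∀ k : Fin n, k ≠ j → σ i j (ucs k) = ucs k)

include hσ

lemma prod_fix (a k : Fin n) (L : List (Fin n)) (haL : a ∉ L) (hkL : k ∉ L) :
    ((L.map (σ a)).prod) (ucs k) = ucs k := by
  induction L with
  | nil => rfl
  | cons j L ih =>
    simp only [List.map_cons, List.prod_cons, MulAut.mul_apply]
    rw [ih (by simp_all) (by simp_all)]
    exact (hσ a j (by simp_all)).2 k (by simp_all)

lemma prod_conj (a k : Fin n) (L : List (Fin n)) (haL : a ∉ L) (hL : L.Nodup)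
    (hkL : k ∈ L) :
    ((L.map (σ a)).prod) (ucs k) = ucs a * ucs k * ucs a := by
  induction L with
  | nil => simp at hkL
  | cons j L ih =>
    simp only [List.map_cons, List.prod_cons, MulAut.mul_apply]
    rcases eq_or_ne j k with rfl | hjk
    · rw [prod_fix σ hσ a j L (by simp_all) (by simp_all)]
      exact (hσ a j (by simp_all)).1
    · rw [ih (by simp_all) (by simp_all) ((List.mem_cons.mp hkL).resolve_left fun h => hjk h.symm)]
      have h1 := (hσ a j (by simp_all)).2 a (by simp_all)
      have h2 := (hσ a j (by simp_all)).2 k (Ne.symm hjk)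
      simp [map_mul, h1, h2]

end Aux

/-- For `n ≥ 3`, the product `σ₁₂σ₁₃⋯σ₁ₙ σ₂₁σ₂₃⋯σ₂ₙ` of partial conjugations
acts as conjugation by `x₁ = s₁s₂`; in particular its restriction to the
characteristic free subgroup `ker ε ≅ F_{n-1}` is the inner automorphism `g_{x₁}`. -/
theorem prod_partialConjugations_eq_conj (n : ℕ) (hn : 3 ≤ n)
    (σ : Fin n → Fin n → MulAut (UnivCoxeterGroup n))
    (hσ : ∀ i j : Fin n, i ≠ j →
      σ i j (ucs j) = ucs i * ucs j * ucs i ∧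
      ∀ k : Fin n, k ≠ j → σ i j (ucs k) = ucs k) :
    ∀ x : UnivCoxeterGroup n,
      ((((List.finRange n).filter (fun j => j ≠ ⟨0, by omega⟩)).map
          (fun j => σ ⟨0, by omega⟩ j)).prod *
       (((List.finRange n).filter (fun j => j ≠ ⟨1, by omega⟩)).map
          (fun j => σ ⟨1, by omega⟩ j)).prod) x =
        (ucs ⟨0, by omega⟩ * ucs ⟨1, by omega⟩) * x *
          (ucs ⟨0, by omega⟩ * ucs ⟨1, by omega⟩)⁻¹ := by
  intro x
  have h0 : (0 : ℕ) < n := by omega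
  have h1 : (1 : ℕ) < n := by omega
  set i0 : Fin n := ⟨0, h0⟩ with hi0
  set i1 : Fin n := ⟨1, h1⟩ with hi1
  have h01 : i0 ≠ i1 := by simp [hi0, hi1, Fin.ext_iff]
  -- the two lists
  have La_prop : ∀ a : Fin n,
      a ∉ ((List.finRange n).filter (fun j => j ≠ a)) ∧
      ((List.finRange n).filter (fun j => j ≠ a)).Nodup ∧
      ∀ k : Fin n, k ≠ a → k ∈ ((List.finRange n).filter (fun j => j ≠ a)) := by
    intro a
    refine ⟨by simp, List.Nodup.filter _ (List.nodup_finRange n), fun k hk => ?_⟩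
    simp [List.mem_filter, hk]
  -- evaluation of each block on generators
  have block : ∀ a k : Fin n,
      ((((List.finRange n).filter (fun j => j ≠ a)).map (fun j => σ a j)).prod)
        (ucs k) = if k = a then ucs k else ucs a * ucs k * ucs a := by
    intro a k
    obtain ⟨hna, hnd, hmem⟩ := La_prop a
    rcases eq_or_ne k a with rfl | hka
    · simp only [if_pos rfl]
      exact prod_fix σ hσ _ _ _ hna hna
    · simp only [if_neg hka]
      exact prod_conj σ hσ _ _ _ hna hnd (hmem k hka)
  -- both sides as monoid homs agree on generators
  set g : UnivCoxeterGroup n := ucs i0 * ucs i1 with hg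
  set φ : MulAut (UnivCoxeterGroup n) :=
    ((((List.finRange n).filter (fun j => j ≠ i0)).map (fun j => σ i0 j)).prod *
     (((List.finRange n).filter (fun j => j ≠ i1)).map (fun j => σ i1 j)).prod)
    with hφ
  have key : (φ : UnivCoxeterGroup n →* UnivCoxeterGroup n)
      = (MulAut.conj g : MulAut (UnivCoxeterGroup n)) := by
    apply PresentedGroup.ext
    intro k
    have hof : (PresentedGroup.of k : UnivCoxeterGroup n) = ucs k := rfl
    show φ (ucs k) = MulAut.conj g (ucs k)
    rw [hφ, MulAut.mul_apply, block i1 k, hg]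
    rcases eq_or_ne k i0 with rfl | hk0
    · rw [if_neg h01, map_mul, map_mul, block i0 i1, block i0 i0]
      simp [MulAut.conj_apply, mul_inv_rev, ucs_inv, mul_assoc, ucs_mul_cancel,
        h01, Ne.symm h01]
    · rcases eq_or_ne k i1 with rfl | hk1
      · rw [if_pos rfl, block i0 i1]
        simp [MulAut.conj_apply, mul_inv_rev, ucs_inv, mul_assoc, ucs_mul_cancel,
          Ne.symm h01]
      · rw [if_neg hk1, map_mul, map_mul, block i0 i1, block i0 k]
        simp [MulAut.conj_apply, mul_inv_rev, ucs_inv, mul_assoc, ucs_mul_cancel,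
          Ne.symm h01, hk0]
  have := DFunLike.congr_fun key x
  simpa [MulAut.conj_apply, mul_assoc] using this
end

section
/- Let G_1, G_2 be groups acting by isometries on a complete CAT(0) space X via homomorphisms φ_1, φ_2 whose images commute elementwise. If G_1 and G_2 each have a global fixed point in X, then the product action of G_1 × G_2 on X (given by (g_1,g_2) ↦ φ_1(g_1)∘φ_2(g_2)) has a global fixed point. -/
/-- A complete metric space is CAT(0) (in the sense of Bruhat–Tits) if every pair
of points has a midpoint satisfying the CN comparison inequality. -/
class CAT0Space (X : Type*) [MetricSpace X] : Prop where
  exists_midpoint : ∀ x y : X, ∃ m : X,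
    dist x m = dist x y / 2 ∧ dist m y = dist x y / 2 ∧
    ∀ z : X, dist z m ^ 2 ≤ (dist z x ^ 2 + dist z y ^ 2) / 2 - dist x y ^ 2 / 4

namespace CAT0Aux

variable {X : Type*} [MetricSpace X]

noncomputable def rad (S : Set X) (x : X) : ℝ := sSup ((dist x) '' S)

variable {S : Set X}

lemma bdd_rad (hS : Bornology.IsBounded S) (x : X) : BddAbove ((dist x) '' S) := by
  obtain ⟨R, hR⟩ := hS.subset_closedBall x
  refine ⟨R, ?_⟩
  rintro d ⟨s, hs, rfl⟩
  simpa [dist_comm] using hR hs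

lemma dist_le_rad (hS : Bornology.IsBounded S) {s x : X} (hs : s ∈ S) :
    dist x s ≤ rad S x :=
  le_csSup (bdd_rad hS x) ⟨s, hs, rfl⟩

lemma rad_nonneg (hS : Bornology.IsBounded S) (hne : S.Nonempty) (x : X) :
    0 ≤ rad S x :=
  dist_nonneg.trans (dist_le_rad hS hne.choose_spec)

lemma rad_le (hne : S.Nonempty) {x : X} {r : ℝ} (h : ∀ s ∈ S, dist x s ≤ r) :
    rad S x ≤ r :=
  csSup_le (hne.image _) (by rintro d ⟨s, hs, rfl⟩; exact h s hs)

lemma rad_lipschitz (hS : Bornology.IsBounded S) (hne : S.Nonempty) (x y : X) :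
    rad S x ≤ dist x y + rad S y :=
  rad_le hne fun s hs => (dist_triangle x y s).trans (by linarith [dist_le_rad hS hs (x := y)])

lemma rad_isometry (f : X ≃ᵢ X) (hf : (f : X → X) '' S = S) (x : X) :
    rad S (f x) = rad S x := by
  unfold rad
  congr 1
  conv_lhs => rw [← hf]
  rw [Set.image_image]
  exact Set.image_congr fun s _ => f.dist_eq x s

lemma circumcenter [CompleteSpace X] [CAT0Space X]
    (hne : S.Nonempty) (hbd : Bornology.IsBounded S) :
    ∃ c : X, ∀ f : X ≃ᵢ X, (f : X → X) '' S = S → f c = c := by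
  set F : X → ℝ := rad S with hF
  have hbdb : BddBelow (Set.range F) := ⟨0, by rintro _ ⟨x, rfl⟩; exact rad_nonneg hbd hne x⟩
  set r : ℝ := sInf (Set.range F) with hr
  have hrle : ∀ x, r ≤ F x := fun x => csInf_le hbdb ⟨x, rfl⟩
  have hr0 : 0 ≤ r := le_csInf ⟨F hne.choose, hne.choose, rfl⟩
    (by rintro _ ⟨x, rfl⟩; exact rad_nonneg hbd hne x)
  -- key inequality from CN
  have key : ∀ x y : X, dist x y ^ 2 ≤ 2 * F x ^ 2 + 2 * F y ^ 2 - 4 * r ^ 2 := by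
    intro x y
    obtain ⟨m, _, _, hcn⟩ := CAT0Space.exists_midpoint x y
    set B : ℝ := (F x ^ 2 + F y ^ 2) / 2 - dist x y ^ 2 / 4 with hB
    have hBs : ∀ s ∈ S, dist m s ^ 2 ≤ B := by
      intro s hs
      have h1 := hcn s
      have h2 : dist s x ≤ F x := by rw [dist_comm]; exact dist_le_rad hbd hs
      have h3 : dist s y ≤ F y := by rw [dist_comm]; exact dist_le_rad hbd hs
      have h2' : dist s x ^ 2 ≤ F x ^ 2 := pow_le_pow_left₀ dist_nonneg h2 2
      have h3' : dist s y ^ 2 ≤ F y ^ 2 := pow_le_pow_left₀ dist_nonneg h3 2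
      have : dist m s = dist s m := dist_comm m s
      rw [this, hB]
      linarith
    have hB0 : 0 ≤ B := le_trans (sq_nonneg _) (hBs hne.choose hne.choose_spec)
    have hFmB : F m ≤ Real.sqrt B := by
      refine rad_le hne fun s hs => ?_
      have := hBs s hs
      nlinarith [Real.sq_sqrt hB0, Real.sqrt_nonneg B, dist_nonneg (x := m) (y := s)]
    have hFm2 : F m ^ 2 ≤ B := by
      calc F m ^ 2 ≤ Real.sqrt B ^ 2 := pow_le_pow_left₀ (rad_nonneg hbd hne m) hFmB 2
        _ = B := Real.sq_sqrt hB0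
    have hrm : r ^ 2 ≤ F m ^ 2 := pow_le_pow_left₀ hr0 (hrle m) 2
    rw [hB] at hFm2
    linarith
  -- minimizing sequence
  have hex : ∀ n : ℕ, ∃ x : X, F x < r + 1 / (n + 1) := by
    intro n
    have hlt : r < r + 1 / (n + 1) := lt_add_of_pos_right _ (by positivity)
    have hrng : (Set.range F).Nonempty := ⟨F hne.choose, hne.choose, rfl⟩
    obtain ⟨_, ⟨x, rfl⟩, hx⟩ := exists_lt_of_csInf_lt hrng hlt
    exact ⟨x, hx⟩
  choose u hu using hex
  have hub : ∀ n : ℕ, F (u n) < r + 1 / (n + 1) := hu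
  -- Cauchy
  have hbound : ∀ N n m : ℕ, N ≤ n → N ≤ m →
      dist (u n) (u m) ≤ Real.sqrt ((8 * r + 4) * (1 / (N + 1))) := by
    intro N n m hn hm
    have hk := key (u n) (u m)
    have han : (1 : ℝ) / (n + 1) ≤ 1 / (N + 1) := by
      apply one_div_le_one_div_of_le (by positivity)
      exact_mod_cast by omega
    have ham : (1 : ℝ) / (m + 1) ≤ 1 / (N + 1) := by
      apply one_div_le_one_div_of_le (by positivity)
      exact_mod_cast by omega
    have hN1 : (1 : ℝ) / (N + 1) ≤ 1 := by
      rw [div_le_one (by positivity)]; linarith [(Nat.cast_nonneg N : (0:ℝ) ≤ N)]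
    have hN0 : (0 : ℝ) ≤ 1 / (N + 1) := by positivity
    have hFn : F (u n) < r + 1 / (N + 1) := (hub n).trans_le (by linarith)
    have hFm : F (u m) < r + 1 / (N + 1) := (hub m).trans_le (by linarith)
    have hFn0 : 0 ≤ F (u n) := rad_nonneg hbd hne _
    have hFm0 : 0 ≤ F (u m) := rad_nonneg hbd hne _
    have hd2 : dist (u n) (u m) ^ 2 ≤ (8 * r + 4) * (1 / (N + 1)) := by
      nlinarith [sq_nonneg (1 / ((N:ℝ) + 1))]
    calc dist (u n) (u m) = Real.sqrt (dist (u n) (u m) ^ 2) := (Real.sqrt_sq dist_nonneg).symm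
      _ ≤ Real.sqrt ((8 * r + 4) * (1 / (N + 1))) := Real.sqrt_le_sqrt hd2
  have hb0 : Filter.Tendsto (fun N : ℕ => Real.sqrt ((8 * r + 4) * (1 / (N + 1))))
      Filter.atTop (nhds 0) := by
    have h1 : Filter.Tendsto (fun N : ℕ => (8 * r + 4) * (1 / ((N:ℝ) + 1)))
        Filter.atTop (nhds 0) := by
      have := tendsto_one_div_add_atTop_nhds_zero_nat.const_mul (8 * r + 4)
      simpa using this
    have h2 := (Real.continuous_sqrt.tendsto 0).comp h1
    simpa [Function.comp_def] using h2
  have hcauchy : CauchySeq u := cauchySeq_of_le_tendsto_0 _ (fun n m N hn hm => hbound N n m hn hm) hb0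
  obtain ⟨c, hc⟩ := cauchySeq_tendsto_of_complete hcauchy
  -- F c = r
  have hFc : F c = r := by
    refine le_antisymm ?_ (hrle c)
    have hle : ∀ n : ℕ, F c ≤ dist c (u n) + (r + 1 / (n + 1)) := fun n =>
      (rad_lipschitz hbd hne c (u n)).trans (by linarith [hub n])
    have htend : Filter.Tendsto (fun n : ℕ => dist c (u n) + (r + 1 / (n + 1)))
        Filter.atTop (nhds r) := by
      have hd : Filter.Tendsto (fun n : ℕ => dist c (u n)) Filter.atTop (nhds 0) := by
        simpa [dist_comm] using (tendsto_iff_dist_tendsto_zero.mp hc)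
      have h2 : Filter.Tendsto (fun n : ℕ => r + 1 / ((n:ℝ) + 1)) Filter.atTop (nhds r) := by
        have := tendsto_one_div_add_atTop_nhds_zero_nat.const_add r
        simpa using this
      simpa using hd.add h2
    exact ge_of_tendsto htend (Filter.Eventually.of_forall hle)
  -- invariance
  refine ⟨c, ?_⟩
  intro f hf
  have hFfc : F (f c) = r := by rw [hF] at *; rw [rad_isometry f hf, hFc]
  have := key (f c) c
  rw [hFfc, hFc] at this
  have hd : dist (f c) c = 0 := by nlinarith [dist_nonneg (x := f c) (y := c)]
  exact eq_of_dist_eq_zero hd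

end CAT0Aux

/-- If two groups act by isometries on a complete CAT(0) space with elementwise
commuting images and each has a global fixed point, then the product action of
`G₁ × G₂` has a global fixed point. -/
theorem product_action_fixedPoint (X : Type*) [MetricSpace X] [CompleteSpace X]
    [CAT0Space X] (G₁ G₂ : Type*) [Group G₁] [Group G₂]
    (φ₁ : G₁ →* (X ≃ᵢ X)) (φ₂ : G₂ →* (X ≃ᵢ X))
    (hcomm : ∀ (g₁ : G₁) (g₂ : G₂), ∀ x : X, φ₁ g₁ (φ₂ g₂ x) = φ₂ g₂ (φ₁ g₁ x))
    (h₁ : ∃ x : X, ∀ g : G₁, φ₁ g x = x) (h₂ : ∃ x : X, ∀ g : G₂, φ₂ g x = x) :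
    ∃ x : X, ∀ (g₁ : G₁) (g₂ : G₂), φ₁ g₁ (φ₂ g₂ x) = x := by
  obtain ⟨x₁, hx₁⟩ := h₁
  obtain ⟨x₂, hx₂⟩ := h₂
  set S : Set X := Set.range (fun g : G₂ => φ₂ g x₁) with hS
  have hne : S.Nonempty := ⟨x₁, 1, by simp⟩
  have hbd : Bornology.IsBounded S := by
    apply (Metric.isBounded_closedBall (x := x₂) (r := dist x₁ x₂)).subset
    rintro _ ⟨g, rfl⟩
    rw [Metric.mem_closedBall]
    calc dist (φ₂ g x₁) x₂ = dist (φ₂ g x₁) (φ₂ g x₂) := by rw [hx₂ g]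
      _ = dist x₁ x₂ := (φ₂ g).dist_eq x₁ x₂
      _ ≤ dist x₁ x₂ := le_rfl
  obtain ⟨c, hc⟩ := CAT0Aux.circumcenter hne hbd
  have fix₂ : ∀ g₂ : G₂, φ₂ g₂ c = c := by
    intro g₂
    apply hc
    rw [hS, ← Set.range_comp]
    have heq : ((φ₂ g₂ : X → X) ∘ fun g : G₂ => φ₂ g x₁) =
        (fun g : G₂ => φ₂ g x₁) ∘ (fun g : G₂ => g₂ * g) := by
      funext g
      simp [map_mul]
    rw [heq, Set.range_comp,
      (show Function.Surjective fun g : G₂ => g₂ * g from fun b => ⟨g₂⁻¹ * b, by simp⟩).range_eq,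
      Set.image_univ]
  have fix₁ : ∀ g₁ : G₁, φ₁ g₁ c = c := by
    intro g₁
    apply hc
    have heqOn : Set.EqOn (φ₁ g₁ : X → X) id S := by
      rintro _ ⟨g, rfl⟩
      simp only [id_eq]
      rw [hcomm g₁ g x₁, hx₁ g₁]
    rw [heqOn.image_eq, Set.image_id]
  exact ⟨c, fun g₁ g₂ => by rw [fix₂ g₂, fix₁ g₁]⟩
end
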